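/- Let G be a simple graph on n vertices and let t ≥ 1 and s ≥ 2 be integers with n ≥ t. If G is t-degenerate (that is, its vertices can be ordered v_1, v_2, ..., v_n so that each v_i has at most t neighbors among v_{i+1}, ..., v_n), then the number of copies of K_s in G satisfies N_s(G) ≤ (n - t)·C(t, s-1) + C(t, s). -/

import Mathlib

/-- `cliqueCount G j` is `N_j(G)`, the number of `j`-vertex cliques (copies of `K_j`) in `G`. -/
noncomputable def cliqueCount {V : Type*} (G : SimpleGraph V) (j : ℕ) : ℕ :=
  Set.ncard {s : Finset V | G.IsNClique j s}

/-- If `G` on `n ≥ t` vertices is `t`-degenerate (its vertices can be ordered so that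
each vertex has at most `t` neighbors among the later vertices), then for `s ≥ 2`
the number of copies of `K_s` satisfies `N_s(G) ≤ (n-t)·C(t, s-1) + C(t, s)`. -/
theorem cliqueCount_of_degenerate {V : Type*} [Fintype V] (G : SimpleGraph V)
    (n t s : ℕ) (hn : Fintype.card V = n) (ht : 1 ≤ t) (hs : 2 ≤ s) (htn : t ≤ n)
    (hdegen : ∃ e : V ≃ Fin n, ∀ v : V, {w : V | G.Adj v w ∧ e v < e w}.ncard ≤ t) :
    cliqueCount G s ≤ (n - t) * Nat.choose t (s - 1) + Nat.choose t s := by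
  classical
  obtain ⟨e, he⟩ := hdegen
  have hn1 : 1 ≤ n := le_trans ht htn
  have hV : Nonempty V := by
    rw [← Fintype.card_pos_iff, hn]; omega
  -- the minimal vertex of a clique
  set mv : Finset V → V := fun K =>
    if h : K.Nonempty then e.symm ((K.image e).min' (h.image e)) else Classical.arbitrary V
    with hmv
  have hmv_mem : ∀ K : Finset V, K.Nonempty → mv K ∈ K := by
    intro K h
    have hm := (K.image e).min'_mem (h.image e)
    rw [Finset.mem_image] at hm
    obtain ⟨w, hw, hew⟩ := hm
    simp only [hmv, dif_pos h]
    rw [← hew, Equiv.symm_apply_apply]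
    exact hw
  have hmv_le : ∀ K : Finset V, ∀ h : K.Nonempty, ∀ w ∈ K, e (mv K) ≤ e w := by
    intro K h w hw
    have : e (mv K) = (K.image e).min' (h.image e) := by
      simp only [hmv, dif_pos h, Equiv.apply_symm_apply]
    rw [this]
    exact Finset.min'_le _ _ (Finset.mem_image_of_mem e hw)
  set S := Finset.univ.filter (fun K : Finset V => G.IsNClique s K) with hS
  have hcc : cliqueCount G s = S.card := by
    rw [cliqueCount, ← Set.ncard_coe_finset]
    congr 1
    ext K; simp [hS]
  have hsum : S.card = ∑ v : V, (S.filter (fun K => mv K = v)).card :=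
    Finset.card_eq_sum_card_fiberwise (fun K _ => Finset.mem_univ (mv K))
  have hfiber : ∀ v : V, (S.filter (fun K => mv K = v)).card
      ≤ (min t (n - 1 - (e v : ℕ))).choose (s - 1) := by
    intro v
    set Nv := Finset.univ.filter (fun w => G.Adj v w ∧ e v < e w) with hNv
    have hNt : Nv.card ≤ t := by
      have := he v
      rwa [show {w : V | G.Adj v w ∧ e v < e w} = ↑Nv by ext w; simp [hNv],
        Set.ncard_coe_finset] at this
    have hNn : Nv.card ≤ n - 1 - (e v : ℕ) := by
      have hle : Nv.card ≤ (Finset.Ioi (e v)).card := by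
        apply Finset.card_le_card_of_injOn (fun w => e w)
        · intro w hw
          simp only [hNv, Finset.mem_coe, Finset.mem_filter] at hw
          simpa using hw.2.2
        · intro a _ b _ hab
          exact e.injective hab
      rwa [Fin.card_Ioi] at hle
    have hNcard : Nv.card ≤ min t (n - 1 - (e v : ℕ)) := le_min hNt hNn
    have hinj : (S.filter (fun K => mv K = v)).card ≤ (Nv.powersetCard (s - 1)).card := by
      apply Finset.card_le_card_of_injOn (fun K => K.erase v)
      · intro K hK
        rw [Finset.mem_coe, Finset.mem_filter] at hK
        obtain ⟨hKS, hKv⟩ := hK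
        rw [hS, Finset.mem_filter] at hKS
        have hclique := hKS.2
        have hKne : K.Nonempty := by
          rw [← Finset.card_pos, hclique.2]; omega
        have hvK : v ∈ K := hKv ▸ hmv_mem K hKne
        rw [Finset.mem_coe, Finset.mem_powersetCard]
        constructor
        · intro w hw
          rw [Finset.mem_erase] at hw
          obtain ⟨hwv, hwK⟩ := hw
          have hadj : G.Adj v w := hclique.1 hvK hwK (Ne.symm hwv)
          have hlt : e v < e w := by
            have hle := hmv_le K hKne w hwK
            rw [hKv] at hle
            exact lt_of_le_of_ne hle (fun hh => hwv (e.injective hh.symm))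
          simp [hNv, hadj, hlt]
        · rw [Finset.card_erase_of_mem hvK, hclique.2]
      · intro K hK K' hK' hKK'
        simp only [Finset.coe_filter, Set.mem_setOf_eq] at hK hK'
        have hKne : K.Nonempty := by
          have := hK.1; rw [hS, Finset.mem_filter] at this
          rw [← Finset.card_pos, this.2.2]; omega
        have hK'ne : K'.Nonempty := by
          have := hK'.1; rw [hS, Finset.mem_filter] at this
          rw [← Finset.card_pos, this.2.2]; omega
        have hvK : v ∈ K := hK.2 ▸ hmv_mem K hKne
        have hvK' : v ∈ K' := hK'.2 ▸ hmv_mem K' hK'ne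
        rw [← Finset.insert_erase hvK, ← Finset.insert_erase hvK']
        exact congrArg (insert v) hKK'
    calc (S.filter (fun K => mv K = v)).card
        ≤ (Nv.powersetCard (s - 1)).card := hinj
      _ = Nv.card.choose (s - 1) := Finset.card_powersetCard _ _
      _ ≤ (min t (n - 1 - (e v : ℕ))).choose (s - 1) := Nat.choose_le_choose _ hNcard
  have hstep : S.card ≤ ∑ j ∈ Finset.range n, (min t j).choose (s - 1) := by
    rw [hsum]
    calc ∑ v : V, (S.filter (fun K => mv K = v)).card
        ≤ ∑ v : V, (min t (n - 1 - (e v : ℕ))).choose (s - 1) :=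
          Finset.sum_le_sum (fun v _ => hfiber v)
      _ = ∑ i : Fin n, (min t (n - 1 - (i : ℕ))).choose (s - 1) :=
          Fintype.sum_equiv e _ _ (fun v => rfl)
      _ = ∑ j ∈ Finset.range n, (min t (n - 1 - j)).choose (s - 1) :=
          Fin.sum_univ_eq_sum_range (fun j => (min t (n - 1 - j)).choose (s - 1)) n
      _ = ∑ j ∈ Finset.range n, (min t j).choose (s - 1) :=
          Finset.sum_range_reflect (fun j => (min t j).choose (s - 1)) n
  have hsplit : ∑ j ∈ Finset.range n, (min t j).choose (s - 1)
      = Nat.choose t s + (n - t) * Nat.choose t (s - 1) := by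
    rw [← Finset.sum_range_add_sum_Ico _ htn]
    congr 1
    · -- small part
      have h1 : ∀ j ∈ Finset.range t, (min t j).choose (s - 1) = j.choose (s - 1) := by
        intro j hj
        rw [Finset.mem_range] at hj
        rw [min_eq_right (le_of_lt hj)]
      rw [Finset.sum_congr rfl h1]
      have h2 : ∑ j ∈ Finset.range t, j.choose (s - 1)
          = ∑ j ∈ Finset.Icc (s - 1) (t - 1), j.choose (s - 1) := by
        apply (Finset.sum_subset _ _).symm
        · intro j hj
          rw [Finset.mem_Icc] at hj
          rw [Finset.mem_range]; omega
        · intro j hj hj'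
          rw [Finset.mem_range] at hj
          rw [Finset.mem_Icc] at hj'
          have : j < s - 1 := by omega
          exact Nat.choose_eq_zero_of_lt this
      rw [h2, Nat.sum_Icc_choose]
      congr 1 <;> omega
    · have h3 : ∀ j ∈ Finset.Ico t n, (min t j).choose (s - 1) = t.choose (s - 1) := by
        intro j hj
        rw [Finset.mem_Ico] at hj
        rw [min_eq_left hj.1]
      rw [Finset.sum_congr rfl h3, Finset.sum_const, Nat.card_Ico, smul_eq_mul]
  rw [hcc]
  omega
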